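/- Let l : M_{k×n}(ℝ) → ℝ be differentiable, U ⊆ (⋀ⁿQ)* open, and V : U → M_{k×n}(ℝ) differentiable such that for every p ∈ U, V(p) is a critical point of v ↦ p(z(v)) − l(v); define ℋ(p) := p(z(V(p))) − l(V(p)). Fix p ∈ U, write z(V(p)) = u₁ ∧ ⋯ ∧ uₙ with u_μ := e_μ + Σᵢ V(p)^i_μ fᵢ (these vectors are linearly independent), and let T denote the subspace of ⋀ⁿQ spanned by all 'slot replacements' u₁ ∧ ⋯ ∧ u_{μ−1} ∧ w ∧ u_{μ+1} ∧ ⋯ ∧ uₙ with 1 ≤ μ ≤ n and w ∈ Q. Then for every π ∈ (⋀ⁿQ)* vanishing identically on T, the derivative of ℋ at p in the direction π is zero. -/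

import Mathlib

open ExteriorAlgebra

/-- The wedge `v₁ ∧ ⋯ ∧ vₙ` of `n` vectors, as an element of the `n`-th exterior power. -/
noncomputable def wedge {Q : Type*} [AddCommGroup Q] [Module ℝ Q] (n : ℕ) (v : Fin n → Q) :
    ⋀[ℝ]^n Q :=
  ⟨ExteriorAlgebra.ιMulti ℝ n v, ExteriorAlgebra.ιMulti_range ℝ n ⟨v, rfl⟩⟩

/-- The columns `u_μ = e_μ + Σᵢ vⁱ_μ fᵢ` of the Plücker chart. -/
def pluckerCol (n k : ℕ) (v : Fin k → Fin n → ℝ) (μ : Fin n) :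
    (Fin n → ℝ) × (Fin k → ℝ) :=
  ((Pi.single μ 1 : Fin n → ℝ), (fun i => v i μ : Fin k → ℝ))

/-- The Plücker chart of the Grassmannian: `z(v) = u₁ ∧ ⋯ ∧ uₙ`. -/
noncomputable def zPlucker (n k : ℕ) (v : Fin k → Fin n → ℝ) :
    ⋀[ℝ]^n ((Fin n → ℝ) × (Fin k → ℝ)) :=
  wedge n (pluckerCol n k v)

namespace St2
variable (n k : ℕ)

abbrev Q := (Fin n → ℝ) × (Fin k → ℝ)

def base (μ : Fin n) (j : Option (Fin k)) : Q n k :=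
  j.elim ((Pi.single μ 1 : Fin n → ℝ), 0) (fun i => (0, Pi.single i 1))

def coef (v : Fin k → Fin n → ℝ) (μ : Fin n) (j : Option (Fin k)) : ℝ :=
  j.elim 1 (fun i => v i μ)

lemma colsum (v : Fin k → Fin n → ℝ) (μ : Fin n) :
    pluckerCol n k v μ = ∑ j : Option (Fin k), coef n k v μ j • base n k μ j := by
  rw [Fintype.sum_option]
  ext x
  · simp [pluckerCol, coef, base, Prod.fst_sum]
  · simp [pluckerCol, coef, base, Prod.snd_sum, Finset.sum_apply, Pi.single_apply]

lemma expand (v : Fin k → Fin n → ℝ) :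
    zPlucker n k v = ∑ r : Fin n → Option (Fin k),
      (∏ μ, coef n k v μ (r μ)) • wedge n (fun μ => base n k μ (r μ)) := by
  apply Subtype.ext
  have h1 : (zPlucker n k v : ExteriorAlgebra ℝ (Q n k))
      = ιMulti ℝ n (fun μ => ∑ j : Option (Fin k), coef n k v μ j • base n k μ j) := by
    simp only [zPlucker, wedge]
    congr 1
    funext μ
    exact colsum n k v μ
  rw [h1]
  rw [show (ιMulti ℝ n (M := Q n k)) (fun μ => ∑ j : Option (Fin k), coef n k v μ j • base n k μ j)
      = (ιMulti ℝ n (M := Q n k)).toMultilinearMap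
        (fun μ => ∑ j : Option (Fin k), coef n k v μ j • base n k μ j) from rfl,
    MultilinearMap.map_sum]
  rw [Submodule.coe_sum]
  refine Finset.sum_congr rfl fun r _ => ?_
  rw [Submodule.coe_smul]
  exact ((ιMulti ℝ n (M := Q n k)).toMultilinearMap.map_smul_univ
    (fun μ => coef n k v μ (r μ)) (fun μ => base n k μ (r μ)))

lemma pairing (φ : Module.Dual ℝ (⋀[ℝ]^n (Q n k))) (v : Fin k → Fin n → ℝ) :
    φ (zPlucker n k v) = ∑ r : Fin n → Option (Fin k),
      (∏ μ, coef n k v μ (r μ)) * φ (wedge n (fun μ => base n k μ (r μ))) := by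
  rw [expand, map_sum]
  simp [map_smul, smul_eq_mul]

lemma coef_diff (r : Fin n → Option (Fin k)) :
    Differentiable ℝ (fun v : Fin k → Fin n → ℝ => ∏ μ, coef n k v μ (r μ)) := by
  intro v
  have hfac : ∀ μ : Fin n, DifferentiableAt ℝ (fun v : Fin k → Fin n → ℝ => coef n k v μ (r μ)) v := by
    intro μ
    cases h : r μ with
    | none => simpa [coef, h] using (differentiableAt_const (1 : ℝ))
    | some i =>
      simp only [coef, h, Option.elim]
      exact (((ContinuousLinearMap.proj (R := ℝ) (φ := fun _ : Fin n => ℝ) μ).comp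
        (ContinuousLinearMap.proj (R := ℝ) (φ := fun _ : Fin k => Fin n → ℝ) i)).differentiable) v
  exact (HasFDerivAt.finset_prod (fun μ _ => (hfac μ).hasFDerivAt)).differentiableAt

end St2

/-- the Legendre-image Hamiltonian is constant in the pseudofiber directions,
i.e. its derivative vanishes in every direction `π` annihilating the tangent space
`T = T_{z(V(p))}D` to the cone of decomposable `n`-vectors (spanned by all slot
replacements `u₁ ∧ ⋯ ∧ w ∧ ⋯ ∧ uₙ`).  The dual space `(⋀ⁿQ)*` is represented by an
arbitrary finite-dimensional normed model `D` via a linear equivalence `ε`. -/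
theorem statement2 (n k : ℕ) (hn : 1 ≤ n) (hk : 1 ≤ k)
    (l : (Fin k → Fin n → ℝ) → ℝ) (hl : Differentiable ℝ l)
    {D : Type*} [NormedAddCommGroup D] [NormedSpace ℝ D]
    (ε : D ≃ₗ[ℝ] Module.Dual ℝ (⋀[ℝ]^n ((Fin n → ℝ) × (Fin k → ℝ))))
    (U : Set D) (hU : IsOpen U)
    (V : D → (Fin k → Fin n → ℝ)) (hV : DifferentiableOn ℝ V U)
    (hcrit : ∀ p ∈ U, fderiv ℝ (fun v => ε p (zPlucker n k v) - l v) (V p) = 0)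
    (ℋ : D → ℝ) (hℋ : ∀ p, ℋ p = ε p (zPlucker n k (V p)) - l (V p))
    (p : D) (hp : p ∈ U)
    (T : Submodule ℝ (⋀[ℝ]^n ((Fin n → ℝ) × (Fin k → ℝ))))
    (hT : T = Submodule.span ℝ
      {w | ∃ (μ : Fin n) (q : (Fin n → ℝ) × (Fin k → ℝ)),
        w = wedge n (Function.update (pluckerCol n k (V p)) μ q)}) :
    LinearIndependent ℝ (pluckerCol n k (V p)) ∧
      ∀ π : Module.Dual ℝ (⋀[ℝ]^n ((Fin n → ℝ) × (Fin k → ℝ))),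
        (∀ t ∈ T, π t = 0) → fderiv ℝ ℋ p (ε.symm π) = 0 := by
  
  constructor
  · -- linear independence
    have h1 : LinearIndependent ℝ (fun μ => (Pi.single μ 1 : Fin n → ℝ)) := by
      have h := (Pi.basisFun ℝ (Fin n)).linearIndependent
      rwa [show ⇑(Pi.basisFun ℝ (Fin n)) = fun μ => (Pi.single μ 1 : Fin n → ℝ) from
        funext fun μ => Pi.basisFun_apply ℝ (Fin n) μ] at h
    exact LinearIndependent.of_comp (LinearMap.fst ℝ (Fin n → ℝ) (Fin k → ℝ)) h1
  intro π hπ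
  -- finite dimensionality
  haveI hfin : FiniteDimensional ℝ ↥(⋀[ℝ]^n (St2.Q n k)) := by
    have h1 : (LinearMap.range (ι ℝ : St2.Q n k →ₗ[ℝ] ExteriorAlgebra ℝ (St2.Q n k))).FG := by
      rw [LinearMap.range_eq_map]
      exact (Module.Finite.fg_top (R := ℝ) (M := St2.Q n k)).map _
    exact Module.Finite.iff_fg.mpr (h1.pow n)
  haveI : FiniteDimensional ℝ D := ε.symm.finiteDimensional
  -- notation
  set c : (Fin k → Fin n → ℝ) → (Fin n → Option (Fin k)) → ℝ :=
    fun v r => ∏ μ, St2.coef n k v μ (r μ) with hc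
  set w : (Fin n → Option (Fin k)) → ↥(⋀[ℝ]^n (St2.Q n k)) :=
    fun r => wedge n (fun μ => St2.base n k μ (r μ)) with hw
  let L : (Fin n → Option (Fin k)) → D →L[ℝ] ℝ := fun r =>
    LinearMap.toContinuousLinearMap ((LinearMap.applyₗ (w r)).comp ε.toLinearMap)
  have hL : ∀ r q, L r q = ε q (w r) := fun r q => rfl
  set V' := fderiv ℝ V p with hV'
  have hVp : HasFDerivAt V V' p := (hV.differentiableAt (hU.mem_nhds hp)).hasFDerivAt
  set cr' : (Fin n → Option (Fin k)) → ((Fin k → Fin n → ℝ) →L[ℝ] ℝ) :=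
    fun r => fderiv ℝ (fun v => c v r) (V p) with hcr'
  have hcr : ∀ r, HasFDerivAt (fun v => c v r) (cr' r) (V p) :=
    fun r => ((St2.coef_diff n k r) (V p)).hasFDerivAt
  -- derivative of ℋ
  have hHfun : ℋ = fun q => (∑ r : Fin n → Option (Fin k), c (V q) r * (L r) q) - l (V q) := by
    funext q
    rw [hℋ q, St2.pairing n k (ε q) (V q)]
    rfl
  have hterm : ∀ r : Fin n → Option (Fin k),
      HasFDerivAt (fun q => c (V q) r * (L r) q)
        (c (V p) r • (L r) + (L r p) • ((cr' r).comp V')) p :=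
    fun r => HasFDerivAt.mul ((hcr r).comp p hVp) ((L r).hasFDerivAt)
  have hlV : HasFDerivAt (fun q => l (V q)) ((fderiv ℝ l (V p)).comp V') p :=
    ((hl (V p)).hasFDerivAt).comp p hVp
  have hH : HasFDerivAt ℋ
      ((∑ r : Fin n → Option (Fin k), (c (V p) r • (L r) + (L r p) • ((cr' r).comp V')))
        - (fderiv ℝ l (V p)).comp V') p := by
    rw [hHfun]
    exact (HasFDerivAt.fun_sum fun r _ => hterm r).sub hlV
  -- derivative from the critical-point condition
  have hgfun : (fun v => ε p (zPlucker n k v) - l v)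
      = fun v => (∑ r : Fin n → Option (Fin k), c v r * (L r) p) - l v := by
    funext v
    rw [St2.pairing n k (ε p) v]
    rfl
  have hg : HasFDerivAt (fun v => ε p (zPlucker n k v) - l v)
      ((∑ r : Fin n → Option (Fin k), (L r p) • cr' r) - fderiv ℝ l (V p)) (V p) := by
    rw [hgfun]
    exact (HasFDerivAt.fun_sum fun r _ => (hcr r).mul_const (L r p)).sub (hl (V p)).hasFDerivAt
  have hcrit0 : (∑ r : Fin n → Option (Fin k), (L r p) • cr' r) - fderiv ℝ l (V p) = 0 := by
    rw [← hg.fderiv]; exact hcrit p hp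
  have hkey : ∀ m, (∑ r : Fin n → Option (Fin k), (L r p) * (cr' r m)) = fderiv ℝ l (V p) m := by
    intro m
    have := sub_eq_zero.mp hcrit0
    calc (∑ r : Fin n → Option (Fin k), (L r p) * (cr' r m))
        = (∑ r : Fin n → Option (Fin k), (L r p) • cr' r) m := by
          simp [ContinuousLinearMap.sum_apply]
      _ = fderiv ℝ l (V p) m := by rw [this]
  -- z(V p) is annihilated by π
  have hmem : zPlucker n k (V p) ∈ T := by
    rw [hT]
    apply Submodule.subset_span
    refine ⟨⟨0, hn⟩, pluckerCol n k (V p) ⟨0, hn⟩, ?_⟩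
    rw [Function.update_eq_self]
    rfl
  have hzero : π (zPlucker n k (V p)) = 0 := hπ _ hmem
  -- conclude
  set d := ε.symm π with hd
  have hsum0 : (∑ r : Fin n → Option (Fin k), c (V p) r * (L r) d) = 0 := by
    have h2 : ε d (zPlucker n k (V p))
        = ∑ r : Fin n → Option (Fin k), c (V p) r * (L r) d :=
      St2.pairing n k (ε d) (V p)
    rw [hd, LinearEquiv.apply_symm_apply] at h2
    rw [← h2, hzero]
  rw [hH.fderiv]
  simp only [ContinuousLinearMap.coe_sub', Pi.sub_apply, ContinuousLinearMap.sum_apply,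
    ContinuousLinearMap.add_apply, ContinuousLinearMap.coe_smul', Pi.smul_apply,
    ContinuousLinearMap.coe_comp', Function.comp_apply, smul_eq_mul]
  rw [Finset.sum_add_distrib, hsum0, hkey (V' d)]
  ring
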